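/- Let n, d be natural numbers, fix τ, t ∈ ℝ and x ∈ ℝ^n, and set l(ξ) = √(‖x − ξ‖² + (t − τ)²). Let V : ℝ^n → ℝ^d be Fréchet differentiable on an open set Ω ⊆ ℝ^n, and let M : ℝ^d × ℝ^n → ℝ^d be continuously Fréchet differentiable. Suppose there is a constant c ∈ ℝ^d such that l(ξ) • M(V(ξ), ξ) = c − V(ξ) for all ξ ∈ Ω. Then for every ξ ∈ Ω with l(ξ) > 0 and every direction w ∈ ℝ^n, the first-order spatial MeanFlow constraint holds: l(ξ) • [D V(ξ)(w) + l(ξ) • D_u M(V(ξ), ξ)(D V(ξ)(w))] = ⟪x − ξ, w⟫ • M(V(ξ), ξ) − l(ξ)² • D_ξ M(V(ξ), ξ)(w). -/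

import Mathlib

open scoped RealInnerProductSpace

/-- First-order spatial MeanFlow constraint. Differentiating the
fundamental identity `l ξ • M (V ξ, ξ) = c − V ξ` on the open set `Ω` in a direction
`w` yields
`l • (DV(w) + l • D_u M (DV(w))) = ⟪x − ξ, w⟫ • M − l² • D_ξ M (w)`.
Partial Fréchet derivatives of `M` are encoded via the full Fréchet derivative:
`D_u M (u, ξ) v = fderiv ℝ M (u, ξ) (v, 0)` and `D_ξ M (u, ξ) w = fderiv ℝ M (u, ξ) (0, w)`. -/
theorem stmt_4 (n d : ℕ) (τ t : ℝ) (x : EuclideanSpace ℝ (Fin n))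
    (l : EuclideanSpace ℝ (Fin n) → ℝ)
    (hl : ∀ ξ, l ξ = Real.sqrt (‖x - ξ‖ ^ 2 + (t - τ) ^ 2))
    (Ω : Set (EuclideanSpace ℝ (Fin n))) (hΩ : IsOpen Ω)
    (V : EuclideanSpace ℝ (Fin n) → EuclideanSpace ℝ (Fin d))
    (hV : DifferentiableOn ℝ V Ω)
    (M : EuclideanSpace ℝ (Fin d) × EuclideanSpace ℝ (Fin n) → EuclideanSpace ℝ (Fin d))
    (hM : ContDiff ℝ 1 M)
    (c : EuclideanSpace ℝ (Fin d))
    (hc : ∀ ξ ∈ Ω, l ξ • M (V ξ, ξ) = c - V ξ) :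
    ∀ ξ ∈ Ω, 0 < l ξ → ∀ w : EuclideanSpace ℝ (Fin n),
      l ξ • (fderiv ℝ V ξ w + l ξ • (fderiv ℝ M (V ξ, ξ)) (fderiv ℝ V ξ w, 0))
        = ⟪x - ξ, w⟫ • M (V ξ, ξ)
          - (l ξ) ^ 2 • (fderiv ℝ M (V ξ, ξ)) (0, w) := by
  intro ξ hξ hlpos w
  set DV := fderiv ℝ V ξ with hDV
  set DM := fderiv ℝ M (V ξ, ξ) with hDM
  have hmem : Ω ∈ nhds ξ := hΩ.mem_nhds hξ
  have hVd : HasFDerivAt V DV ξ := (hV.differentiableAt hmem).hasFDerivAt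
  have hMd : HasFDerivAt M DM (V ξ, ξ) :=
    ((hM.differentiable one_ne_zero) (V ξ, ξ)).hasFDerivAt
  -- derivative of the composite ξ' ↦ M (V ξ', ξ')
  have hG : HasFDerivAt (fun ξ' => (V ξ', ξ'))
      (DV.prod (ContinuousLinearMap.id ℝ _)) ξ := hVd.prodMk (hasFDerivAt_id ξ)
  have hcomp : HasFDerivAt (fun ξ' => M (V ξ', ξ'))
      (DM.comp (DV.prod (ContinuousLinearMap.id ℝ _))) ξ := by
    exact HasFDerivAt.comp ξ hMd hG
  -- derivative of l
  have hq : HasFDerivAt (fun ξ' : EuclideanSpace ℝ (Fin n) => ‖x - ξ'‖ ^ 2 + (t - τ) ^ 2)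
      ((2 • (innerSL ℝ (x - ξ)).comp (-(ContinuousLinearMap.id ℝ _)))) ξ := by
    have h1 : HasFDerivAt (fun ξ' : EuclideanSpace ℝ (Fin n) => x - ξ')
        (-(ContinuousLinearMap.id ℝ (EuclideanSpace ℝ (Fin n)))) ξ := by
      exact (hasFDerivAt_id (𝕜 := ℝ) ξ).const_sub x
    simpa using h1.norm_sq.add_const ((t - τ) ^ 2)
  have hqpos : (0:ℝ) < ‖x - ξ‖ ^ 2 + (t - τ) ^ 2 := by
    by_contra h
    push_neg at h
    have : l ξ = 0 := by rw [hl ξ, Real.sqrt_eq_zero']; exact h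
    linarith
  have hld : HasFDerivAt l
      ((1 / (2 * Real.sqrt (‖x - ξ‖ ^ 2 + (t - τ) ^ 2))) •
        (2 • (innerSL ℝ (x - ξ)).comp (-(ContinuousLinearMap.id ℝ _)))) ξ := by
    have := hq.sqrt (ne_of_gt hqpos)
    simpa [funext hl] using this
  set L := ((1 / (2 * Real.sqrt (‖x - ξ‖ ^ 2 + (t - τ) ^ 2))) •
        (2 • (innerSL ℝ (x - ξ)).comp (-(ContinuousLinearMap.id ℝ _)))) with hLdef
  -- the product
  have hprod : HasFDerivAt (fun ξ' => l ξ' • M (V ξ', ξ'))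
      (l ξ • (DM.comp (DV.prod (ContinuousLinearMap.id ℝ _))) +
        L.smulRight (M (V ξ, ξ))) ξ := hld.smul hcomp
  -- the right-hand side
  have hrhs : HasFDerivAt (fun ξ' => c - V ξ') (-DV) ξ := by
    exact hVd.const_sub c
  have heq : (fun ξ' => l ξ' • M (V ξ', ξ')) =ᶠ[nhds ξ] (fun ξ' => c - V ξ') :=
    Filter.eventually_of_mem hmem (fun ξ' h => hc ξ' h)
  have huniq : (l ξ • (DM.comp (DV.prod (ContinuousLinearMap.id ℝ _))) +
        L.smulRight (M (V ξ, ξ))) = -DV :=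
    (hprod.congr_of_eventuallyEq heq.symm).unique hrhs
  have key := congrArg (fun (T : EuclideanSpace ℝ (Fin n) →L[ℝ] EuclideanSpace ℝ (Fin d)) => T w) huniq
  simp only [ContinuousLinearMap.add_apply, ContinuousLinearMap.smul_apply,
    ContinuousLinearMap.smulRight_apply, ContinuousLinearMap.comp_apply,
    ContinuousLinearMap.prod_apply, ContinuousLinearMap.coe_id', id_eq,
    ContinuousLinearMap.neg_apply] at key
  -- compute L w
  have hLw : L w = -(⟪x - ξ, w⟫ / l ξ) := by
    rw [hLdef]
    simp only [ContinuousLinearMap.smul_apply, ContinuousLinearMap.smul_apply,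
      ContinuousLinearMap.comp_apply, ContinuousLinearMap.neg_apply,
      ContinuousLinearMap.coe_id', id_eq, innerSL_apply_apply, smul_eq_mul]
    rw [← hl ξ]
    have : l ξ ≠ 0 := ne_of_gt hlpos
    field_simp
    rw [inner_neg_right]
    ring
  rw [hLw] at key
  -- split DM (DV w, w)
  have hsplit : DM (DV w, w) = DM (DV w, 0) + DM (0, w) := by
    rw [← map_add]
    congr 1
    simp [Prod.ext_iff]
  rw [hsplit] at key
  have hlne : l ξ ≠ 0 := ne_of_gt hlpos
  have key2 := congrArg (fun v => l ξ • v) key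
  simp only [smul_add, smul_smul, smul_neg] at key2
  have hcoef : l ξ * -(⟪x - ξ, w⟫ / l ξ) = -⟪x - ξ, w⟫ := by
    field_simp
  rw [hcoef] at key2
  have goal' : l ξ • DV w + (l ξ * l ξ) • DM (DV w, 0)
      = ⟪x - ξ, w⟫ • M (V ξ, ξ) - (l ξ * l ξ) • DM (0, w) := by
    linear_combination (norm := module) key2
  rw [smul_add, smul_smul]
  rw [goal', pow_two]
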